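/- Let F = a x^r y^{r+1} + b x^{r+1} y^r with a,b ∈ ℂ nonzero and r ≥ 0. Then the Waring rank of F equals r + 1. -/

import Mathlib

open MvPolynomial Finset

noncomputable def lin (c : ℂ × ℂ) : MvPolynomial (Fin 2) ℂ :=
  C c.1 * X 0 + C c.2 * X 1

noncomputable def waringRank (d : ℕ) (F : MvPolynomial (Fin 2) ℂ) : ℕ :=
  sInf {r | ∃ (a : Fin r → ℂ) (c : Fin r → ℂ × ℂ), F = ∑ i, C (a i) * lin (c i) ^ d}

noncomputable def Kc (r : ℕ) (a b : ℂ) : ℂ :=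
  (-1) / (((r:ℂ)+2) * ((2*r+1).choose r : ℂ) * (-a)^r * b^r)


-- divisibility helpers
lemma dvd_iff1 (r k : ℕ) (hk : k < 2*r+2) : (r+2) ∣ (k+2) ↔ k = r := by
  constructor
  · rintro ⟨t, ht⟩
    match t with
    | 0 => omega
    | 1 => omega
    | (t+2) => have : (r+2)*2 ≤ (r+2)*(t+2) := Nat.mul_le_mul_left _ (by omega); omega
  · rintro rfl; exact ⟨1, by ring⟩

lemma dvd_iff2 (r k : ℕ) (hk : k < 2*r+2) : (r+2) ∣ (k+1) ↔ k = r+1 := by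
  constructor
  · rintro ⟨t, ht⟩
    match t with
    | 0 => omega
    | 1 => omega
    | (t+2) => have : (r+2)*2 ≤ (r+2)*(t+2) := Nat.mul_le_mul_left _ (by omega); omega
  · rintro rfl; exact ⟨1, by ring⟩

noncomputable def om (r : ℕ) : ℂ := Complex.exp (2 * Real.pi * Complex.I / (r+2))

lemma om_prim (r : ℕ) : IsPrimitiveRoot (om r) (r+2) := by
  have := Complex.isPrimitiveRoot_exp (r+2) (by omega)
  simpa [om] using this

lemma geom_aux (r m : ℕ) :
    ∑ j ∈ range (r+2), (om r)^(j*m) = if (r+2) ∣ m then ((r:ℂ)+2) else 0 := by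
  have hω := om_prim r
  simp_rw [mul_comm _ m, pow_mul]
  by_cases h : (r+2) ∣ m
  · rw [if_pos h, (hω.pow_eq_one_iff_dvd m).2 h]
    simp
  · rw [if_neg h]
    have hne : (om r)^m ≠ 1 := fun hh => h ((hω.pow_eq_one_iff_dvd m).1 hh)
    rw [geom_sum_eq hne]
    have h1 : ((om r)^m)^(r+2) = 1 := by
      rw [← pow_mul, mul_comm, pow_mul, hω.pow_eq_one, one_pow]
    rw [h1]; simp

lemma Tsum (r m : ℕ) :
    ∑ j : Fin (r+1), ((om r)^(j.1+1))^m = (if (r+2) ∣ m then ((r:ℂ)+2) else 0) - 1 := by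
  have h := geom_aux r m
  rw [sum_range_succ'] at h
  simp only [zero_mul, pow_zero] at h
  rw [Fin.sum_univ_eq_sum_range (fun j => ((om r)^(j+1))^m)]
  simp_rw [← pow_mul]
  linear_combination h

lemma scalar_id (a b : ℂ) (ha : a ≠ 0) (hb : b ≠ 0) (r : ℕ) (x y : ℂ) :
    ∑ j : Fin (r+1), (Kc r a b * (((om r)^(j.1+1))^2 - (om r)^(j.1+1))) *
        (b * (om r)^(j.1+1) * x + (-a) * y)^(2*r+1)
      = a * x^r * y^(r+1) + b * x^(r+1) * y^r := by
  set K := Kc r a b with hK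
  have step1 : ∀ j : Fin (r+1),
      (K * (((om r)^(j.1+1))^2 - (om r)^(j.1+1))) * (b * (om r)^(j.1+1) * x + (-a) * y)^(2*r+1)
      = ∑ k ∈ range (2*r+2),
          (b^k * x^k * ((-a)^(2*r+1-k) * y^(2*r+1-k)) * (((2*r+1).choose k : ℕ) : ℂ)) * K *
            (((om r)^(j.1+1))^(k+2) - ((om r)^(j.1+1))^(k+1)) := by
    intro j
    rw [add_pow, Finset.mul_sum]
    refine sum_congr rfl fun k _ => ?_
    rw [mul_pow, mul_pow, mul_pow]
    ring
  rw [sum_congr rfl fun j _ => step1 j, Finset.sum_comm]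
  have step2 : ∀ k ∈ range (2*r+2),
      (∑ j : Fin (r+1),
        (b^k * x^k * ((-a)^(2*r+1-k) * y^(2*r+1-k)) * (((2*r+1).choose k : ℕ) : ℂ)) * K *
          (((om r)^(j.1+1))^(k+2) - ((om r)^(j.1+1))^(k+1)))
      = (if k = r then (b^k * x^k * ((-a)^(2*r+1-k) * y^(2*r+1-k)) * (((2*r+1).choose k : ℕ) : ℂ)) * K * ((r:ℂ)+2) else 0)
        - (if k = r+1 then (b^k * x^k * ((-a)^(2*r+1-k) * y^(2*r+1-k)) * (((2*r+1).choose k : ℕ) : ℂ)) * K * ((r:ℂ)+2) else 0) := by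
    intro k hk
    rw [← Finset.mul_sum, Finset.sum_sub_distrib, Tsum, Tsum]
    simp only [dvd_iff1 r k (mem_range.1 hk), dvd_iff2 r k (mem_range.1 hk)]
    by_cases h1 : k = r
    · rw [if_pos h1, if_pos h1, if_neg (by omega), if_neg (by omega)]; ring
    · rw [if_neg h1, if_neg h1]
      by_cases h2 : k = r+1
      · rw [if_pos h2, if_pos h2]; ring
      · rw [if_neg h2, if_neg h2]; ring
  rw [sum_congr rfl step2, Finset.sum_sub_distrib, Finset.sum_ite_eq' (range (2*r+2)) r,
      Finset.sum_ite_eq' (range (2*r+2)) (r+1),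
      if_pos (mem_range.2 (by omega)), if_pos (mem_range.2 (by omega))]
  have e1 : 2*r+1 - r = r+1 := by omega
  have e2 : 2*r+1 - (r+1) = r := by omega
  have e3 : (2*r+1).choose (r+1) = (2*r+1).choose r := by
    rw [← Nat.choose_symm (by omega : r ≤ 2*r+1), e1]
  rw [e1, e2, e3]
  have hA : (-a)^r ≠ 0 := pow_ne_zero _ (neg_ne_zero.2 ha)
  have hB : b^r ≠ 0 := pow_ne_zero _ hb
  have hC : (((2*r+1).choose r : ℕ) : ℂ) ≠ 0 := by
    exact_mod_cast Nat.cast_ne_zero.2 (Nat.choose_pos (by omega : r ≤ 2*r+1)).ne'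
  have hr2 : ((r:ℂ)+2) ≠ 0 := by
    intro h
    have h2 : (((r+2 : ℕ)) : ℂ) = 0 := by push_cast; linear_combination h
    exact (by omega : r+2 ≠ 0) (Nat.cast_eq_zero.1 h2)
  rw [hK, Kc, pow_succ (-a) r, pow_succ b r]
  field_simp
  ring

lemma upper_mem (a b : ℂ) (ha : a ≠ 0) (hb : b ≠ 0) (r : ℕ) :
    ∃ (α : Fin (r+1) → ℂ) (c : Fin (r+1) → ℂ × ℂ),
      (C a * X (0 : Fin 2) ^ r * X 1 ^ (r + 1) + C b * X (0 : Fin 2) ^ (r + 1) * X 1 ^ r)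
        = ∑ i, C (α i) * lin (c i) ^ (2*r+1) := by
  refine ⟨fun j => Kc r a b * (((om r)^(j.1+1))^2 - (om r)^(j.1+1)),
          fun j => (b * (om r)^(j.1+1), -a), ?_⟩
  apply MvPolynomial.funext
  intro v
  rw [map_sum]
  simp only [lin, map_add, map_mul, map_pow, eval_C, eval_X]
  rw [scalar_id a b ha hb r (v 0) (v 1)]

noncomputable def mu (d k : ℕ) : Fin 2 →₀ ℕ :=
  Finsupp.single 0 k + Finsupp.single 1 (d - k)

lemma mu_inj {d j k : ℕ} (h : mu d j = mu d k) : j = k := by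
  have h0 := congrArg (fun f => f (0 : Fin 2)) h
  simpa [mu, Finsupp.single_apply] using h0

lemma mono_eq (c : ℂ) (i j : ℕ) :
    (C c * X (0:Fin 2)^i * X 1^j : MvPolynomial (Fin 2) ℂ)
      = monomial (Finsupp.single 0 i + Finsupp.single 1 j) c := by
  rw [X_pow_eq_monomial, X_pow_eq_monomial, C_mul_monomial, mul_one, monomial_mul, mul_one]

lemma coeff_linpow (p q : ℂ) (d k : ℕ) (hk : k ≤ d) :
    coeff (mu d k) ((C p * X (0:Fin 2) + C q * X 1)^d)
      = ((d.choose k : ℕ) : ℂ) * p^k * q^(d-k) := by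
  rw [add_pow]
  have hterm : ∀ j, (C p * X (0:Fin 2))^j * (C q * X 1)^(d-j)
        * ((d.choose j : ℕ) : MvPolynomial (Fin 2) ℂ)
      = monomial (mu d j) (((d.choose j : ℕ):ℂ) * p^j * q^(d-j)) := by
    intro j
    rw [← map_natCast (C : ℂ →+* MvPolynomial (Fin 2) ℂ), mul_pow, mul_pow, ← C_pow, ← C_pow]
    have hsplit : (C (((d.choose j : ℕ):ℂ) * p^j * q^(d-j)) : MvPolynomial (Fin 2) ℂ)
        = C ((d.choose j:ℕ):ℂ) * C (p^j) * C (q^(d-j)) := by rw [map_mul, map_mul]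
    rw [show mu d j = Finsupp.single (0:Fin 2) j + Finsupp.single 1 (d-j) from rfl,
        ← mono_eq, hsplit]
    ring
  simp_rw [hterm]
  rw [MvPolynomial.coeff_sum]
  rw [Finset.sum_eq_single k]
  · rw [coeff_monomial, if_pos rfl]
  · intro j _ hj; rw [coeff_monomial, if_neg (fun h => hj (mu_inj h))]
  · intro hk'; exact absurd (mem_range.2 (by omega)) hk'

lemma Feq_coeff (a b : ℂ) (r k : ℕ) (hk : k ≤ 2*r+1) :
    coeff (mu (2*r+1) k)
      (C a * X (0 : Fin 2) ^ r * X 1 ^ (r + 1) + C b * X (0 : Fin 2) ^ (r + 1) * X 1 ^ r)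
      = (if k = r then a else 0) + (if k = r+1 then b else 0) := by
  rw [coeff_add, mono_eq, mono_eq, coeff_monomial, coeff_monomial]
  have c1 : (Finsupp.single (0:Fin 2) r + Finsupp.single 1 (r+1) = mu (2*r+1) k) ↔ k = r := by
    rw [show Finsupp.single (0:Fin 2) r + Finsupp.single 1 (r+1) = mu (2*r+1) r from by
      rw [mu, show 2*r+1-r = r+1 from by omega]]
    exact ⟨fun h => (mu_inj h).symm, fun h => by rw [h]⟩
  have c2 : (Finsupp.single (0:Fin 2) (r+1) + Finsupp.single 1 r = mu (2*r+1) k) ↔ k = r+1 := by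
    rw [show Finsupp.single (0:Fin 2) (r+1) + Finsupp.single 1 r = mu (2*r+1) (r+1) from by
      rw [mu, show 2*r+1-(r+1) = r from by omega]]
    exact ⟨fun h => (mu_inj h).symm, fun h => by rw [h]⟩
  simp only [c1, c2]

lemma lower_bd (a b : ℂ) (ha : a ≠ 0) (hb : b ≠ 0) (r n : ℕ)
    (α : Fin n → ℂ) (c : Fin n → ℂ × ℂ)
    (hF : (C a * X (0 : Fin 2) ^ r * X 1 ^ (r + 1) + C b * X (0 : Fin 2) ^ (r + 1) * X 1 ^ r)
        = ∑ i, C (α i) * lin (c i) ^ (2*r+1)) :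
    r + 1 ≤ n := by
  by_contra hn
  push_neg at hn
  have hCne : ∀ k, k ≤ 2*r+1 → (((2*r+1).choose k : ℕ):ℂ) ≠ 0 := fun k hk =>
    Nat.cast_ne_zero.2 (Nat.choose_pos hk).ne'
  have mom : ∀ k, k ≤ 2*r+1 →
      (((2*r+1).choose k : ℕ) : ℂ) * (∑ i, α i * ((c i).1^k * (c i).2^(2*r+1-k)))
      = (if k = r then a else 0) + (if k = r+1 then b else 0) := by
    intro k hk
    have h1 : coeff (mu (2*r+1) k) (∑ i, C (α i) * lin (c i) ^ (2*r+1))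
        = ∑ i, α i * ((((2*r+1).choose k : ℕ):ℂ) * ((c i).1^k * (c i).2^(2*r+1-k))) := by
      rw [MvPolynomial.coeff_sum]
      refine Finset.sum_congr rfl fun i _ => ?_
      rw [coeff_C_mul, lin, coeff_linpow _ _ _ _ hk]
      ring
    have h2 := Feq_coeff a b r k hk
    rw [hF, h1] at h2
    rw [← h2, Finset.mul_sum]
    exact Finset.sum_congr rfl fun i _ => by ring
  have mval : ∀ k, k ≤ 2*r → (∑ i, α i * ((c i).1^k * (c i).2^(2*r+1-k)))
      = ((if k = r then a else 0) + (if k = r+1 then b else 0)) / (((2*r+1).choose k : ℕ):ℂ) := by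
    intro k hk
    rw [eq_div_iff (hCne k (by omega)), mul_comm]
    exact mom k (by omega)
  set M : Matrix (Fin (r+1)) (Fin (r+1)) ℂ :=
    fun s t => ((if (s:ℕ)+(t:ℕ) = r then a else 0) + (if (s:ℕ)+(t:ℕ) = r+1 then b else 0))
                 / (((2*r+1).choose ((s:ℕ)+(t:ℕ)) : ℕ):ℂ) with hM
  have hMsum : ∀ s t : Fin (r+1), M s t
      = ∑ i, (α i * (c i).2) * ((c i).1^(s:ℕ) * (c i).2^(r-(s:ℕ)))
                             * ((c i).1^(t:ℕ) * (c i).2^(r-(t:ℕ))) := by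
    intro s t
    have hs := s.isLt; have ht := t.isLt
    simp only [hM]
    rw [← mval ((s:ℕ)+(t:ℕ)) (by omega)]
    refine Finset.sum_congr rfl fun i _ => ?_
    have he : 2*r+1 - ((s:ℕ)+(t:ℕ)) = (r-(s:ℕ)) + ((r-(t:ℕ)) + 1) := by omega
    rw [he, pow_add, pow_add, pow_add, pow_one]
    ring
  -- det M ≠ 0
  have hdiag : ∀ s : Fin (r+1), M.submatrix id Fin.rev s s = a / (((2*r+1).choose r : ℕ):ℂ) := by
    intro s
    have hs := s.isLt
    have hrev : ((Fin.rev s : Fin (r+1)) : ℕ) = r - (s:ℕ) := by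
      rw [Fin.val_rev]; omega
    simp only [Matrix.submatrix_apply, id]; simp only [hM, hrev]
    rw [if_pos (by omega), if_neg (by omega), add_zero,
        show (s:ℕ) + (r - (s:ℕ)) = r from by omega]
  have htri : (M.submatrix id Fin.rev).BlockTriangular (OrderDual.toDual) := by
    intro s t hlt
    have hs := s.isLt; have ht := t.isLt
    have hlt' : (s:ℕ) < (t:ℕ) := hlt
    have hrev : ((Fin.rev t : Fin (r+1)) : ℕ) = r - (t:ℕ) := by rw [Fin.val_rev]; omega
    simp only [Matrix.submatrix_apply, id]; simp only [hM, hrev]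
    rw [if_neg (by omega), if_neg (by omega), add_zero, zero_div]
  have hdet' : (M.submatrix id Fin.rev).det ≠ 0 := by
    rw [Matrix.det_of_lowerTriangular _ htri]
    refine Finset.prod_ne_zero_iff.2 fun s _ => ?_
    rw [hdiag s]
    exact div_ne_zero ha (hCne r (by omega))
  have hdet : M.det ≠ 0 := by
    intro h
    have hperm := Matrix.det_permute' (Fin.revPerm) M
    rw [show (⇑(Fin.revPerm : Equiv.Perm (Fin (r+1)))) = (Fin.rev : Fin (r+1) → Fin (r+1)) from rfl, h, mul_zero] at hperm
    exact hdet' hperm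
  -- kernel vector
  set B : Matrix (Fin (r+1)) (Fin (r+1)) ℂ :=
    fun s t => if h : (s:ℕ) < n then (c ⟨s,h⟩).1^(t:ℕ) * (c ⟨s,h⟩).2^(r-(t:ℕ)) else 0 with hB
  have hdetB : B.det = 0 := by
    refine Matrix.det_eq_zero_of_row_eq_zero (⟨r, by omega⟩ : Fin (r+1)) fun j => ?_
    simp only [hB, Fin.val_mk]
    rw [dif_neg (by omega : ¬ r < n)]
  obtain ⟨v, hv, hBv⟩ := Matrix.exists_mulVec_eq_zero_iff.2 hdetB
  have hrow : ∀ i : Fin n, ∑ t : Fin (r+1), ((c i).1^(t:ℕ) * (c i).2^(r-(t:ℕ))) * v t = 0 := by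
    intro i
    have h0 := congrFun hBv ⟨(i:ℕ), by omega⟩
    simp only [Matrix.mulVec, dotProduct, hB, Pi.zero_apply, Fin.val_mk] at h0
    rw [← h0]
    refine Finset.sum_congr rfl fun t _ => ?_
    rw [dif_pos i.isLt, Fin.eta]
  have hMv : M.mulVec v = 0 := by
    funext s
    simp only [Matrix.mulVec, dotProduct, Pi.zero_apply]
    calc ∑ t, M s t * v t
        = ∑ t : Fin (r+1), ∑ i, ((α i * (c i).2) * ((c i).1^(s:ℕ) * (c i).2^(r-(s:ℕ))))
            * (((c i).1^(t:ℕ) * (c i).2^(r-(t:ℕ))) * v t) := by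
          refine Finset.sum_congr rfl fun t _ => ?_
          rw [hMsum s t, Finset.sum_mul]
          exact Finset.sum_congr rfl fun i _ => by ring
      _ = ∑ i, ((α i * (c i).2) * ((c i).1^(s:ℕ) * (c i).2^(r-(s:ℕ))))
            * ∑ t : Fin (r+1), ((c i).1^(t:ℕ) * (c i).2^(r-(t:ℕ))) * v t := by
          rw [Finset.sum_comm]
          exact Finset.sum_congr rfl fun i _ => by rw [Finset.mul_sum]
      _ = 0 := Finset.sum_eq_zero fun i _ => by rw [hrow i, mul_zero]
  exact hdet (Matrix.exists_mulVec_eq_zero_iff.1 ⟨v, hv, hMv⟩)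


theorem waring_rank_binomial_symmetric (a b : ℂ) (ha : a ≠ 0) (hb : b ≠ 0) (r : ℕ) :
    waringRank (2 * r + 1)
      (C a * X (0 : Fin 2) ^ r * X 1 ^ (r + 1) + C b * X (0 : Fin 2) ^ (r + 1) * X 1 ^ r)
      = r + 1 := by
  have hmem : (r+1) ∈ {m | ∃ (α : Fin m → ℂ) (c : Fin m → ℂ × ℂ),
      (C a * X (0 : Fin 2) ^ r * X 1 ^ (r + 1) + C b * X (0 : Fin 2) ^ (r + 1) * X 1 ^ r)
        = ∑ i, C (α i) * lin (c i) ^ (2*r+1)} := upper_mem a b ha hb r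
  refine le_antisymm (Nat.sInf_le hmem) (le_csInf ⟨r+1, hmem⟩ ?_)
  rintro m ⟨α, c, hF⟩
  exact lower_bd a b ha hb r m α c hF
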